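/- For a random variable X with values in [0,1]: X is not a.s. a function of Y if and only if there exists a random variable U (on an extension of the probability space) with U independent of Y but U not independent of X. -/

import Mathlib

open MeasureTheory ProbabilityTheory
open scoped ENNReal

open Set in
lemma compProd_condDistrib' {Ω : Type} [MeasurableSpace Ω] (μ : Measure Ω) [IsProbabilityMeasure μ]
    {X Y : Ω → ℝ} (hX : Measurable X) (hY : Measurable Y) :
    (μ.map Y) ⊗ₘ condDistrib X Y μ = μ.map (fun ω => (Y ω, X ω)) := by
  rw [condDistrib_def, ← Measure.fst_map_prodMk hX]
  exact Measure.disintegrate _ _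

lemma master {Ω : Type} [MeasurableSpace Ω] (μ : Measure Ω) [IsProbabilityMeasure μ]
    {X Y : Ω → ℝ} (hX : Measurable X) (hY : Measurable Y)
    {g : ℝ → ℝ≥0∞} (hg : Measurable g) {s : Set ℝ} (hs : MeasurableSet s) :
    ∫⁻ ω in X ⁻¹' s, g (Y ω) ∂μ = ∫⁻ y, g y * condDistrib X Y μ y s ∂(μ.map Y) := by
  have hF : Measurable (fun p : ℝ × ℝ => g p.1 * s.indicator 1 p.2) :=
    (hg.comp measurable_fst).mul ((measurable_one.indicator hs).comp measurable_snd)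
  have h1 : ∫⁻ ω in X ⁻¹' s, g (Y ω) ∂μ
      = ∫⁻ ω, g (Y ω) * s.indicator 1 (X ω) ∂μ := by
    rw [← lintegral_indicator (hX hs)]
    congr 1; ext ω
    by_cases h : X ω ∈ s <;> simp [Set.indicator, h]
  rw [h1]
  have h2 : ∫⁻ ω, g (Y ω) * s.indicator 1 (X ω) ∂μ
      = ∫⁻ p, g p.1 * s.indicator 1 p.2 ∂(μ.map (fun ω => (Y ω, X ω))) :=
    (lintegral_map hF (hY.prodMk hX)).symm
  rw [h2, ← compProd_condDistrib' μ hX hY, Measure.lintegral_compProd hF]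
  congr 1; ext y
  simp only []
  rw [show (fun b : ℝ => g (y, b).1 * s.indicator 1 (y, b).2) = fun b => g y * s.indicator 1 b from rfl,
    lintegral_const_mul _ (measurable_one.indicator hs), lintegral_indicator_one hs]

open Set in
lemma exists_point_mass (ν : Measure ℝ) [IsProbabilityMeasure ν] (h01 : ν (Set.Icc 0 1) = 1)
    (hq : ∀ q : ℚ, ν (Set.Iic (q:ℝ)) = 0 ∨ ν (Set.Iic (q:ℝ)) = 1) :
    ∃ c : ℝ, ν {c} = 1 := by
  set T : Set ℝ := {r | ν (Set.Iic r) = 1} with hT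
  have h1T : (1:ℝ) ∈ T := by
    have hle : ν (Set.Icc (0:ℝ) 1) ≤ ν (Set.Iic 1) := measure_mono (fun x hx => hx.2)
    exact le_antisymm prob_le_one (h01 ▸ hle)
  have hcompl0 : ν ((Set.Icc (0:ℝ) 1)ᶜ) = 0 := (prob_compl_eq_zero_iff measurableSet_Icc).mpr h01
  have hbdd : ∀ r ∈ T, (0:ℝ) ≤ r := by
    intro r hr
    by_contra hneg; push_neg at hneg
    have hsub : Set.Iic r ⊆ (Set.Icc (0:ℝ) 1)ᶜ := by
      intro x hx hmem
      exact absurd (le_trans hmem.1 hx) (not_le.mpr hneg)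
    have h0 : ν (Set.Iic r) = 0 := le_antisymm (hcompl0 ▸ measure_mono hsub) bot_le
    have hr' : ν (Set.Iic r) = 1 := hr
    rw [h0] at hr'
    exact zero_ne_one hr'
  have hTne : T.Nonempty := ⟨1, h1T⟩
  have hbb : BddBelow T := ⟨0, fun r hr => hbdd r hr⟩
  set c := sInf T with hc
  have hq1 : ∀ q : ℚ, c < (q:ℝ) → ν (Set.Iic (q:ℝ)) = 1 := by
    intro q hcq
    obtain ⟨r, hrT, hrq⟩ := exists_lt_of_csInf_lt hTne hcq
    refine le_antisymm prob_le_one ?_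
    calc (1:ℝ≥0∞) = ν (Set.Iic r) := hrT.symm
    _ ≤ ν (Set.Iic (q:ℝ)) := measure_mono (Set.Iic_subset_Iic.mpr hrq.le)
  have hIoi : ν (Set.Ioi c) = 0 := by
    have hU : Set.Ioi c = ⋃ q : {q : ℚ // c < (q:ℝ)}, Set.Ioi ((q:ℝ)) := by
      ext r
      simp only [Set.mem_Ioi, Set.mem_iUnion]
      constructor
      · intro hr
        obtain ⟨q, hq1', hq2⟩ := exists_rat_btwn hr
        exact ⟨⟨q, hq1'⟩, hq2⟩
      · rintro ⟨⟨q, hq1'⟩, hq2⟩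
        exact lt_trans hq1' hq2
    rw [hU]
    refine measure_iUnion_null ?_
    rintro ⟨q, hq'⟩
    have : ν (Set.Iic (q:ℝ)) = 1 := hq1 q hq'
    rw [← Set.compl_Iic]
    exact (prob_compl_eq_zero_iff measurableSet_Iic).mpr this
  have hIio : ν (Set.Iio c) = 0 := by
    have hU : Set.Iio c = ⋃ q : {q : ℚ // (q:ℝ) < c}, Set.Iic ((q:ℝ)) := by
      ext r
      simp only [Set.mem_Iio, Set.mem_iUnion]
      constructor
      · intro hr
        obtain ⟨q, hq1', hq2⟩ := exists_rat_btwn hr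
        exact ⟨⟨q, hq2⟩, hq1'.le⟩
      · rintro ⟨⟨q, hq1'⟩, hq2⟩
        exact lt_of_le_of_lt hq2 hq1'
    rw [hU]
    refine measure_iUnion_null ?_
    rintro ⟨q, hq'⟩
    rcases hq q with h0 | h1
    · exact h0
    · exact absurd (csInf_le hbb h1) (not_le.mpr hq')
  refine ⟨c, ?_⟩
  have hcompl : ν ({c}ᶜ) = 0 := by
    have : ({c}ᶜ : Set ℝ) = Set.Iio c ∪ Set.Ioi c := by
      ext x
      simp only [Set.mem_compl_iff, Set.mem_singleton_iff, Set.mem_union, Set.mem_Iio, Set.mem_Ioi]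
      exact ne_iff_lt_or_gt
    rw [this]
    exact measure_union_null hIio hIoi
  exact (prob_compl_eq_zero_iff (measurableSet_singleton c)).mp hcompl

open Set in
lemma exists_fun {Ω : Type} [MeasurableSpace Ω] (μ : Measure Ω) [IsProbabilityMeasure μ]
    {X Y : Ω → ℝ} (hX : Measurable X) (hY : Measurable Y)
    (hXr : ∀ ω, X ω ∈ Set.Icc (0:ℝ) 1)
    (hcase : ∀ q : ℚ, ∀ᵐ y ∂(μ.map Y),
      condDistrib X Y μ y (Set.Iic (q:ℝ)) = 0 ∨ condDistrib X Y μ y (Set.Iic (q:ℝ)) = 1) :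
    ∃ f : ℝ → ℝ, Measurable f ∧ X =ᵐ[μ] fun ω => f (Y ω) := by
  haveI : IsProbabilityMeasure (μ.map Y) := Measure.isProbabilityMeasure_map hY.aemeasurable
  set ν := μ.map Y with hν
  set κ := condDistrib X Y μ with hκ
  -- a.e. y, κ y (Icc 0 1) = 1
  have hint : ∫⁻ y, κ y (Set.Icc 0 1) ∂ν = 1 := by
    have h1 := master μ hX hY (g := fun _ => (1:ℝ≥0∞)) measurable_const (measurableSet_Icc (a := (0:ℝ)) (b := 1))
    simp only [one_mul] at h1
    rw [← h1]
    have : X ⁻¹' Set.Icc (0:ℝ) 1 = Set.univ := by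
      ext ω; simp [hXr ω]
    rw [this]
    simp
  have hIcc : ∀ᵐ y ∂ν, κ y (Set.Icc 0 1) = 1 := by
    have hmeas : Measurable fun y => κ y (Set.Icc (0:ℝ) 1) := Kernel.measurable_coe _ measurableSet_Icc
    have hle : ∀ y, κ y (Set.Icc (0:ℝ) 1) ≤ 1 := fun y => prob_le_one
    have hsub : ∫⁻ y, (1 - κ y (Set.Icc 0 1)) ∂ν = 0 := by
      rw [lintegral_sub hmeas (by rw [hint]; exact ENNReal.one_ne_top)
        (Filter.Eventually.of_forall hle), hint]
      simp
    have := (lintegral_eq_zero_iff (measurable_const.sub hmeas)).mp hsub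
    filter_upwards [this] with y hy
    have : (1:ℝ≥0∞) ≤ κ y (Set.Icc 0 1) := tsub_eq_zero_iff_le.mp hy
    exact le_antisymm (hle y) this
  -- define f
  have hsm : StronglyMeasurable fun y => ∫ x, x ∂κ y :=
    MeasureTheory.StronglyMeasurable.integral_kernel_prod_right
      (f := fun _ (b : ℝ) => b) measurable_snd.stronglyMeasurable
  set f : ℝ → ℝ := fun y => ∫ x, x ∂κ y with hf
  have hfm : Measurable f := hsm.measurable
  have key : ∀ᵐ y ∂ν, κ y {f y} = 1 := by
    filter_upwards [ae_all_iff.mpr hcase, hIcc] with y hy hIcc'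
    obtain ⟨c, hc⟩ := exists_point_mass (κ y) hIcc' hy
    have hcompl : κ y ({c}ᶜ) = 0 := (prob_compl_eq_zero_iff (measurableSet_singleton c)).mpr hc
    have hae' : (fun x : ℝ => x) =ᵐ[κ y] (fun _ => c) := by
      rw [Filter.EventuallyEq, ae_iff]
      have hset : {x : ℝ | ¬ x = c} = ({c}ᶜ : Set ℝ) := by ext x; simp
      rw [hset, hcompl]
    have : f y = c := by
      rw [hf]
      simp only []
      rw [integral_congr_ae hae', integral_const]
      simp
    rw [this]
    exact hc
  refine ⟨f, hfm, ?_⟩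
  have hD : MeasurableSet {p : ℝ × ℝ | p.2 = f p.1} :=
    measurableSet_eq_fun measurable_snd (hfm.comp measurable_fst)
  rw [Filter.EventuallyEq, ae_iff]
  have hpre : {ω | ¬ X ω = f (Y ω)} = (fun ω => (Y ω, X ω)) ⁻¹' {p : ℝ × ℝ | p.2 = f p.1}ᶜ := by
    ext ω; simp
  rw [hpre, ← Measure.map_apply (hY.prodMk hX) hD.compl, ← compProd_condDistrib' μ hX hY,
    Measure.compProd_apply hD.compl]
  have hzero : (fun y => κ y (Prod.mk y ⁻¹' {p : ℝ × ℝ | p.2 = f p.1}ᶜ)) =ᵐ[ν] 0 := by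
    filter_upwards [key] with y hy
    have : Prod.mk y ⁻¹' {p : ℝ × ℝ | p.2 = f p.1}ᶜ = {f y}ᶜ := by
      ext x; simp
    rw [this]
    simpa [Pi.zero_apply] using (prob_compl_eq_zero_iff (measurableSet_singleton (f y))).mpr hy
  rw [lintegral_congr_ae hzero]
  simp

open Set in
lemma construction {Ω : Type} [MeasurableSpace Ω] (μ : Measure Ω) [IsProbabilityMeasure μ]
    {X Y : Ω → ℝ} (hX : Measurable X) (hY : Measurable Y) (q : ℚ)
    (hq : ¬ ∀ᵐ y ∂(μ.map Y),
      condDistrib X Y μ y (Set.Iic (q:ℝ)) = 0 ∨ condDistrib X Y μ y (Set.Iic (q:ℝ)) = 1) :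
    ∃ (Ω' : Type) (_ : MeasurableSpace Ω') (μ' : Measure Ω'),
      IsProbabilityMeasure μ' ∧
      ∃ X' Y' U : Ω' → ℝ,
        Measurable X' ∧ Measurable Y' ∧ Measurable U ∧
        Measure.map (fun ω => (X' ω, Y' ω)) μ' = Measure.map (fun ω => (X ω, Y ω)) μ ∧
        IndepFun U Y' μ' ∧ ¬ IndepFun U X' μ' := by
  classical
  haveI : IsProbabilityMeasure (μ.map Y) := Measure.isProbabilityMeasure_map hY.aemeasurable
  set a : ℝ := (q : ℝ) with ha
  set ν := μ.map Y with hν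
  set κ := condDistrib X Y μ with hκ
  set Q : ℝ → ℝ≥0∞ := fun y => κ y (Set.Iic a) with hQdef
  have hQm : Measurable Q := Kernel.measurable_coe _ measurableSet_Iic
  have hQle : ∀ y, Q y ≤ 1 := fun y => prob_le_one
  set p : ℝ → ℝ := fun y => (Q y).toReal with hpdef
  have hpm : Measurable p := hQm.ennreal_toReal
  have hp0 : ∀ y, 0 ≤ p y := fun y => ENNReal.toReal_nonneg
  have hp1 : ∀ y, p y ≤ 1 := fun y => by
    rw [hpdef]
    exact ENNReal.toReal_le_of_le_ofReal zero_le_one (by simpa using hQle y)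
  have hQofReal : ∀ y, ENNReal.ofReal (p y) = Q y := fun y =>
    ENNReal.ofReal_toReal (ne_top_of_le_ne_top ENNReal.one_ne_top (hQle y))
  -- the auxiliary probability space
  set Λ : Measure ℝ := volume.restrict (Set.Icc 0 1) with hΛ
  haveI hΛprob : IsProbabilityMeasure Λ := by
    constructor
    rw [hΛ, Measure.restrict_apply_univ, Real.volume_Icc]
    norm_num
  set μ' : Measure (Ω × ℝ) := μ.prod Λ with hμ'
  haveI : IsProbabilityMeasure μ' := by rw [hμ']; infer_instance
  -- height function
  set hval : Ω → ℝ := fun ω => (1 - p (Y ω))/2 + (if X ω ≤ a then 1/2 else 0) with hhval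
  have hvalm : Measurable hval := by
    apply Measurable.add
    · exact (measurable_const.sub (hpm.comp hY)).div_const 2
    · exact Measurable.ite (measurableSet_le hX measurable_const) measurable_const measurable_const
  have hval0 : ∀ ω, 0 ≤ hval ω := by
    intro ω
    have h1 : 0 ≤ (1 - p (Y ω))/2 := by
      have := hp1 (Y ω); linarith
    have h2 : (0:ℝ) ≤ (if X ω ≤ a then 1/2 else 0) := by positivity
    rw [hhval]; dsimp only; linarith
  have hval1 : ∀ ω, hval ω ≤ 1 := by
    intro ω
    have h1 : (1 - p (Y ω))/2 ≤ 1/2 := by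
      have := hp0 (Y ω); linarith
    have h2 : (if X ω ≤ a then 1/2 else 0) ≤ (1:ℝ)/2 := by
      split <;> norm_num
    rw [hhval]; dsimp only; linarith
  set C : Set (Ω × ℝ) := {z | z.2 < hval z.1} with hCdef
  have hC : MeasurableSet C := measurableSet_lt measurable_snd (hvalm.comp measurable_fst)
  set U : Ω × ℝ → ℝ := fun z => if z ∈ C then 1 else 0 with hUdef
  have hUm : Measurable U := Measurable.ite hC measurable_const measurable_const
  -- slice computation
  have slice : ∀ (E : Set Ω), MeasurableSet E →
      μ' (C ∩ (E ×ˢ Set.univ)) = ∫⁻ ω in E, ENNReal.ofReal (hval ω) ∂μ := by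
    intro E hE
    rw [hμ', Measure.prod_apply (hC.inter (hE.prod MeasurableSet.univ)), ← lintegral_indicator hE]
    congr 1; ext ω
    by_cases hω : ω ∈ E
    · have hpre : Prod.mk ω ⁻¹' (C ∩ E ×ˢ Set.univ) = Set.Iio (hval ω) := by
        ext t
        simp [hCdef, hω]
      rw [hpre, Set.indicator_of_mem hω, hΛ, Measure.restrict_apply measurableSet_Iio]
      have hint : Set.Iio (hval ω) ∩ Set.Icc 0 1 = Set.Ico 0 (hval ω) := by
        ext t
        constructor
        · rintro ⟨h1, h2, _⟩; exact ⟨h2, h1⟩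
        · rintro ⟨h1, h2⟩; exact ⟨h2, h1, le_trans h2.le (hval1 ω)⟩
      rw [hint, Real.volume_Ico]
      simp
    · have hpre : Prod.mk ω ⁻¹' (C ∩ E ×ˢ Set.univ) = ∅ := by
        ext t
        simp [hCdef, hω]
      rw [hpre, Set.indicator_of_notMem hω]
      simp
  -- decomposition of ofReal hval
  have hofReal : ∀ ω, ENNReal.ofReal (hval ω)
      = 2⁻¹ * (1 - Q (Y ω)) + 2⁻¹ * (Set.Iic a).indicator 1 (X ω) := by
    intro ω
    rw [hhval]
    dsimp only
    rw [ENNReal.ofReal_add (by have := hp1 (Y ω); linarith) (by positivity)]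
    congr 1
    · rw [div_eq_inv_mul, ENNReal.ofReal_mul (by norm_num), ENNReal.ofReal_inv_of_pos (by norm_num)]
      congr 1
      · norm_num
      · rw [ENNReal.ofReal_sub _ (hp0 (Y ω)), hQofReal]
        simp
    · by_cases h : X ω ≤ a
      · simp only [h, if_true, Set.indicator_of_mem (Set.mem_Iic.mpr h)]
        rw [ENNReal.ofReal_div_of_pos (by norm_num)]
        simp [ENNReal.div_eq_inv_mul]
      · simp only [h, if_false, Set.indicator_of_notMem (fun hc => h (Set.mem_Iic.mp hc))]
        simp
  -- component integrals
  have hBcomp : ∀ (E : Set Ω), MeasurableSet E →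
      ∫⁻ ω in E, (Set.Iic a).indicator 1 (X ω) ∂μ = μ (X ⁻¹' Set.Iic a ∩ E) := by
    intro E hE
    have : ∀ ω, (Set.Iic a).indicator (1 : ℝ → ℝ≥0∞) (X ω)
        = (X ⁻¹' Set.Iic a).indicator (1 : Ω → ℝ≥0∞) ω := by
      intro ω
      by_cases h : X ω ∈ Set.Iic a <;> simp [Set.indicator_apply, h]
    simp_rw [this]
    rw [lintegral_indicator_one (hX measurableSet_Iic), Measure.restrict_apply (hX measurableSet_Iic)]
  -- key identity for sets of the form Y ⁻¹' B
  have hkeyY : ∀ (B : Set ℝ), MeasurableSet B →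
      μ' (C ∩ ((Y ⁻¹' B) ×ˢ Set.univ)) = 2⁻¹ * μ (Y ⁻¹' B) := by
    intro B hB
    rw [slice _ (hY hB)]
    simp_rw [hofReal]
    have hm1' : Measurable fun ω : Ω => 1 - Q (Y ω) := (measurable_const.sub hQm).comp hY
    have hm2' : Measurable fun ω : Ω => (Set.Iic a).indicator (1 : ℝ → ℝ≥0∞) (X ω) :=
      ((measurable_one.indicator measurableSet_Iic)).comp hX
    rw [lintegral_add_left (hm1'.const_mul _), lintegral_const_mul _ hm1',
      lintegral_const_mul _ hm2']
    have hsub : ∫⁻ ω in Y ⁻¹' B, (1 - Q (Y ω)) ∂μ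
        = μ (Y ⁻¹' B) - μ (Y ⁻¹' B ∩ X ⁻¹' Set.Iic a) := by
      have hQY : Measurable fun ω : Ω => Q (Y ω) := hQm.comp hY
      rw [lintegral_sub hQY ?hfin ?hle]
      · rw [setLIntegral_one]
        congr 1
        rw [hκ] at hQdef
        rw [hQdef]
        exact setLIntegral_preimage_condDistrib hY hX.aemeasurable measurableSet_Iic hB
      case hfin =>
        refine ne_top_of_le_ne_top (measure_ne_top (μ.restrict (Y ⁻¹' B)) Set.univ) ?_
        calc ∫⁻ ω in Y ⁻¹' B, Q (Y ω) ∂μ ≤ ∫⁻ _ in Y ⁻¹' B, 1 ∂μ :=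
              lintegral_mono fun ω => hQle (Y ω)
          _ = μ.restrict (Y ⁻¹' B) Set.univ := by rw [setLIntegral_one]; simp
      case hle =>
        exact Filter.Eventually.of_forall fun ω => hQle (Y ω)
    rw [hsub, hBcomp _ (hY hB)]
    rw [Set.inter_comm (X ⁻¹' Set.Iic a) (Y ⁻¹' B)]
    rw [← mul_add, tsub_add_cancel_of_le (measure_mono Set.inter_subset_left)]
  -- abbreviations
  have hYpre : ∀ (B : Set ℝ), (fun z : Ω × ℝ => Y z.1) ⁻¹' B = (Y ⁻¹' B) ×ˢ Set.univ := by
    intro B; ext z; simp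
  have hXpre : ∀ (B : Set ℝ), (fun z : Ω × ℝ => X z.1) ⁻¹' B = (X ⁻¹' B) ×ˢ Set.univ := by
    intro B; ext z; simp
  have hμ'prod : ∀ (E : Set Ω), MeasurableSet E → μ' (E ×ˢ Set.univ) = μ E := by
    intro E hE
    rw [hμ', Measure.prod_prod]
    simp
  have hC12 : μ' C = 2⁻¹ := by
    have h := hkeyY Set.univ MeasurableSet.univ
    simp only [Set.preimage_univ, Set.univ_prod_univ, Set.inter_univ, measure_univ, mul_one] at h
    exact h
  have key2 : ∀ t : Set ℝ, MeasurableSet t →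
      μ' (C ∩ (fun z : Ω × ℝ => Y z.1) ⁻¹' t) = 2⁻¹ * μ' ((fun z : Ω × ℝ => Y z.1) ⁻¹' t) := by
    intro t ht
    rw [hYpre, hkeyY t ht, hμ'prod _ (hY ht)]
  have hCc12 : μ' Cᶜ = 2⁻¹ := by
    rw [measure_compl hC (measure_ne_top _ _), hC12, measure_univ,
      ← ENNReal.inv_two_add_inv_two, ENNReal.add_sub_cancel_right (by norm_num)]
  have hUpre : ∀ s : Set ℝ, U ⁻¹' s
      = (if (1:ℝ) ∈ s then C else ∅) ∪ (if (0:ℝ) ∈ s then Cᶜ else ∅) := by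
    intro s; ext z
    by_cases hz : z ∈ C <;> by_cases h1 : (1:ℝ) ∈ s <;> by_cases h0 : (0:ℝ) ∈ s <;>
      simp [hUdef, hz, h1, h0]
  have hcompl_key : ∀ (D : Set (Ω × ℝ)), μ' (C ∩ D) = 2⁻¹ * μ' D →
      μ' (Cᶜ ∩ D) = 2⁻¹ * μ' D := by
    intro D hCD
    have h2 : μ' (D ∩ C) + μ' (D \ C) = μ' D := measure_inter_add_diff D hC
    rw [Set.inter_comm, hCD] at h2
    have hhalves : 2⁻¹ * μ' D + 2⁻¹ * μ' D = μ' D := by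
      rw [← add_mul, ENNReal.inv_two_add_inv_two, one_mul]
    have hfin : 2⁻¹ * μ' D ≠ ∞ :=
      ENNReal.mul_ne_top (by norm_num) (measure_ne_top _ _)
    have hdiff : μ' (D \ C) = 2⁻¹ * μ' D := by
      refine (ENNReal.add_right_inj hfin).mp ?_
      rw [h2, hhalves]
    rw [Set.inter_comm, ← Set.diff_eq, hdiff]
  -- independence of U and Y'
  have hindepY : IndepFun U (fun z : Ω × ℝ => Y z.1) μ' := by
    rw [indepFun_iff_measure_inter_preimage_eq_mul]
    intro s t _ ht
    rw [hUpre s]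
    by_cases h1 : (1:ℝ) ∈ s <;> by_cases h0 : (0:ℝ) ∈ s <;>
      simp only [h1, h0, if_true, if_false, Set.union_empty, Set.empty_union,
        Set.union_compl_self]
    · simp
    · rw [key2 t ht, hC12]
    · rw [hcompl_key _ (key2 t ht), hCc12]
    · simp
  -- the key X computation
  set V : ℝ≥0∞ := ∫⁻ y, (1 - Q y) * Q y ∂ν with hVdef
  have hkeyX : μ' (C ∩ ((X ⁻¹' Set.Iic a) ×ˢ Set.univ))
      = 2⁻¹ * V + 2⁻¹ * μ (X ⁻¹' Set.Iic a) := by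
    rw [slice _ (hX measurableSet_Iic)]
    simp_rw [hofReal]
    have hm1' : Measurable fun ω : Ω => 1 - Q (Y ω) := (measurable_const.sub hQm).comp hY
    have hm2' : Measurable fun ω : Ω => (Set.Iic a).indicator (1 : ℝ → ℝ≥0∞) (X ω) :=
      ((measurable_one.indicator measurableSet_Iic)).comp hX
    rw [lintegral_add_left (hm1'.const_mul _), lintegral_const_mul _ hm1',
      lintegral_const_mul _ hm2']
    congr 1
    · congr 1
      have hm := master μ hX hY (g := fun y => 1 - Q y) (measurable_const.sub hQm)
        (measurableSet_Iic (a := a))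
      rw [hVdef, hν]
      exact hm
    · congr 1
      rw [hBcomp _ (hX measurableSet_Iic), Set.inter_self]
  have hVpos : V ≠ 0 := by
    intro h0
    have hae0 := (lintegral_eq_zero_iff ((measurable_const.sub hQm).mul hQm)).mp h0
    apply hq
    filter_upwards [hae0] with y hy
    rcases mul_eq_zero.mp hy with h | h
    · right
      exact le_antisymm (hQle y) (tsub_eq_zero_iff_le.mp h)
    · left
      exact h
  -- non-independence of U and X'
  have hU1 : U ⁻¹' {(1:ℝ)} = C := by
    ext z; by_cases hz : z ∈ C <;> simp [hUdef, hz]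
  have hnotind : ¬ IndepFun U (fun z : Ω × ℝ => X z.1) μ' := by
    intro hind
    have h := hind.measure_inter_preimage_eq_mul {(1:ℝ)} (Set.Iic a)
      (measurableSet_singleton 1) measurableSet_Iic
    rw [hU1, hXpre, hkeyX, hμ'prod _ (hX measurableSet_Iic), hC12] at h
    have hfin : 2⁻¹ * μ (X ⁻¹' Set.Iic a) ≠ ∞ :=
      ENNReal.mul_ne_top (by norm_num) (measure_ne_top _ _)
    have hV0 : (2:ℝ≥0∞)⁻¹ * V = 0 := by
      refine (ENNReal.add_right_inj hfin).mp ?_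
      rw [add_zero, add_comm]
      exact h
    rcases mul_eq_zero.mp hV0 with h' | h'
    · exact absurd h' (ENNReal.inv_ne_zero.mpr (by norm_num))
    · exact hVpos h'
  -- equality of joint distributions
  have hmapeq : Measure.map (fun z : Ω × ℝ => (X z.1, Y z.1)) μ'
      = Measure.map (fun ω => (X ω, Y ω)) μ := by
    have hcomp : (fun z : Ω × ℝ => (X z.1, Y z.1)) = (fun ω => (X ω, Y ω)) ∘ Prod.fst := rfl
    rw [hcomp, ← Measure.map_map (hX.prodMk hY) measurable_fst, hμ', Measure.map_fst_prod]
    simp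
  exact ⟨Ω × ℝ, inferInstance, μ', inferInstance, fun z => X z.1, fun z => Y z.1, U,
    hX.comp measurable_fst, hY.comp measurable_fst, hUm, hmapeq, hindepY, hnotind⟩

theorem stmt17 {Ω : Type} [MeasurableSpace Ω] (μ : Measure Ω) [IsProbabilityMeasure μ]
    (X Y : Ω → ℝ) (hX : Measurable X) (hY : Measurable Y)
    (hXr : ∀ ω, X ω ∈ Set.Icc (0:ℝ) 1) (hYr : ∀ ω, Y ω ∈ Set.Icc (0:ℝ) 1) :
    (¬ ∃ f : ℝ → ℝ, Measurable f ∧ X =ᵐ[μ] fun ω => f (Y ω)) ↔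
      ∃ (Ω' : Type) (_ : MeasurableSpace Ω') (μ' : Measure Ω'),
        IsProbabilityMeasure μ' ∧
        ∃ X' Y' U : Ω' → ℝ,
          Measurable X' ∧ Measurable Y' ∧ Measurable U ∧
          Measure.map (fun ω => (X' ω, Y' ω)) μ' = Measure.map (fun ω => (X ω, Y ω)) μ ∧
          IndepFun U Y' μ' ∧ ¬ IndepFun U X' μ' := by
  constructor
  · intro h
    by_cases hcase : ∀ q : ℚ, ∀ᵐ y ∂(μ.map Y),
        condDistrib X Y μ y (Set.Iic (q:ℝ)) = 0 ∨ condDistrib X Y μ y (Set.Iic (q:ℝ)) = 1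
    · exact absurd (exists_fun μ hX hY hXr hcase) h
    · obtain ⟨q, hq⟩ := not_forall.mp hcase
      exact construction μ hX hY q hq
  · rintro ⟨Ω', m', μ', hprob, X', Y', U, hX', hY', hU, hmap, hUY, hUX⟩ ⟨f, hf, hae⟩
    haveI := hprob
    have hD : MeasurableSet {p : ℝ × ℝ | p.1 = f p.2} :=
      measurableSet_eq_fun measurable_fst (hf.comp measurable_snd)
    have h1 : μ' ((fun ω => (X' ω, Y' ω)) ⁻¹' {p : ℝ × ℝ | p.1 = f p.2}ᶜ) = 0 := by
      rw [← Measure.map_apply (hX'.prodMk hY') hD.compl, hmap,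
        Measure.map_apply (hX.prodMk hY) hD.compl]
      have hset : (fun ω => (X ω, Y ω)) ⁻¹' {p : ℝ × ℝ | p.1 = f p.2}ᶜ
          = {ω | ¬ X ω = f (Y ω)} := by
        ext ω; simp
      rw [hset]
      rw [Filter.EventuallyEq, ae_iff] at hae
      exact hae
    have haeX' : X' =ᵐ[μ'] fun ω => f (Y' ω) := by
      rw [Filter.EventuallyEq, ae_iff]
      have hset : {ω | ¬ X' ω = f (Y' ω)}
          = (fun ω => (X' ω, Y' ω)) ⁻¹' {p : ℝ × ℝ | p.1 = f p.2}ᶜ := by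
        ext ω; simp
      rw [hset]
      exact h1
    have hind2 : IndepFun U (fun ω => f (Y' ω)) μ' := hUY.comp measurable_id hf
    exact hUX (hind2.congr (Filter.EventuallyEq.refl _ _) haeX'.symm)
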